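/- arXiv:2111.02334 — 2 statements merged into one kernel-verified Lean document; each statement's English description precedes it below -/
import Mathlib

section
/- Under a completely randomized design with three groups, the expected value of the variance estimator V̂ = s1²/N1 + s2²/N2 + s3²/N3 (where s_k² is the sample variance of observed outcomes in group k) is at least the true variance of τ̂; specifically E[V̂] − V[τ̂] = S_τ²/N ≥ 0, so the Neyman-type variance estimator is conservative. -/
open Finset

set_option maxHeartbeats 4000000

namespace Stmt4Aux

variable {N N1 N2 N3 : ℕ}

def SD (N N1 N2 N3 : ℕ) : Finset (Fin N → Fin 3) :=
  univ.filter (fun ξ : Fin N → Fin 3 =>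
      (univ.filter (fun i => ξ i = 0)).card = N1 ∧
      (univ.filter (fun i => ξ i = 1)).card = N2 ∧
      (univ.filter (fun i => ξ i = 2)).card = N3)

def cnt (N1 N2 N3 : ℕ) : Fin 3 → ℕ := ![N1, N2, N3]

@[simp] lemma cnt_zero : cnt N1 N2 N3 0 = N1 := rfl
@[simp] lemma cnt_one : cnt N1 N2 N3 1 = N2 := rfl
@[simp] lemma cnt_two : cnt N1 N2 N3 2 = N3 := rfl

lemma card_comp (ξ : Fin N → Fin 3) (σ : Equiv.Perm (Fin N)) (k : Fin 3) :
    (univ.filter fun i => ξ (σ i) = k).card = (univ.filter fun i => ξ i = k).card := by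
  apply Finset.card_bij (fun i _ => σ i)
  · intro a ha; simp only [mem_filter, mem_univ, true_and] at ha ⊢; exact ha
  · intro a _ b _ h; exact σ.injective h
  · intro b hb
    simp only [mem_filter, mem_univ, true_and] at hb ⊢
    exact ⟨σ.symm b, by simpa using hb, by simp⟩

lemma comp_mem_SD {ξ : Fin N → Fin 3} (σ : Equiv.Perm (Fin N)) (h : ξ ∈ SD N N1 N2 N3) :
    ξ ∘ σ ∈ SD N N1 N2 N3 := by
  simp only [SD, mem_filter, mem_univ, true_and, Function.comp] at h ⊢
  refine ⟨?_, ?_, ?_⟩ <;> rw [card_comp] <;> tauto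

lemma card_cnt {ξ : Fin N → Fin 3} (h : ξ ∈ SD N N1 N2 N3) (k : Fin 3) :
    (univ.filter fun i => ξ i = k).card = cnt N1 N2 N3 k := by
  simp only [SD, mem_filter, mem_univ, true_and] at h
  fin_cases k <;> simp [cnt] <;> tauto

lemma count1_const (k : Fin 3) (i j : Fin N) :
    ((SD N N1 N2 N3).filter fun ξ => ξ i = k).card
      = ((SD N N1 N2 N3).filter fun ξ => ξ j = k).card := by
  apply Finset.card_nbij' (fun ξ => ξ ∘ Equiv.swap i j) (fun ξ => ξ ∘ Equiv.swap i j)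
  · intro ξ hξ
    simp only [Finset.mem_coe, mem_filter] at hξ ⊢
    exact ⟨comp_mem_SD _ hξ.1, by simpa [Function.comp, Equiv.swap_apply_right] using hξ.2⟩
  · intro ξ hξ
    simp only [Finset.mem_coe, mem_filter] at hξ ⊢
    exact ⟨comp_mem_SD _ hξ.1, by simpa [Function.comp, Equiv.swap_apply_left] using hξ.2⟩
  · intro ξ _; funext x; simp [Function.comp, Equiv.swap_apply_self]
  · intro ξ _; funext x; simp [Function.comp, Equiv.swap_apply_self]

lemma count1 (k : Fin 3) (i : Fin N) :
    N * ((SD N N1 N2 N3).filter fun ξ => ξ i = k).card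
      = (SD N N1 N2 N3).card * cnt N1 N2 N3 k := by
  have h1 : ∑ j : Fin N, ((SD N N1 N2 N3).filter fun ξ => ξ j = k).card
      = (SD N N1 N2 N3).card * cnt N1 N2 N3 k := by
    have : ∀ j : Fin N, ((SD N N1 N2 N3).filter fun ξ => ξ j = k).card
        = ∑ ξ ∈ SD N N1 N2 N3, if ξ j = k then 1 else 0 := by
      intro j; rw [Finset.card_filter]
    rw [Finset.sum_congr rfl fun j _ => this j, Finset.sum_comm]
    rw [Finset.sum_congr rfl (fun ξ hξ => ?_), Finset.sum_const, smul_eq_mul]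
    rw [← Finset.card_filter]
    exact card_cnt hξ k
  calc N * ((SD N N1 N2 N3).filter fun ξ => ξ i = k).card
      = ∑ _j : Fin N, ((SD N N1 N2 N3).filter fun ξ => ξ i = k).card := by
        simp [Finset.sum_const, Finset.card_univ, mul_comm]
    _ = ∑ j : Fin N, ((SD N N1 N2 N3).filter fun ξ => ξ j = k).card :=
        Finset.sum_congr rfl fun j _ => count1_const k i j
    _ = _ := h1

lemma exists_perm {i j i' j' : Fin N} (hij : i ≠ j) (hij' : i' ≠ j') :
    ∃ σ : Equiv.Perm (Fin N), σ i = i' ∧ σ j = j' := by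
  classical
  set σ1 := Equiv.swap i i' with hσ1
  set j1 := σ1 j with hj1
  have hji' : j1 ≠ i' := by
    have : σ1 j ≠ σ1 i := fun h => hij.symm (σ1.injective h)
    rw [hj1]; rwa [hσ1, Equiv.swap_apply_left i i'] at this
  refine ⟨σ1.trans (Equiv.swap j1 j'), ?_, ?_⟩
  · simp only [Equiv.trans_apply]
    rw [hσ1, Equiv.swap_apply_left]
    exact Equiv.swap_apply_of_ne_of_ne hji'.symm hij'
  · simp only [Equiv.trans_apply, ← hj1, Equiv.swap_apply_left]

lemma count2_const (k l : Fin 3) {i j i' j' : Fin N} (hij : i ≠ j) (hij' : i' ≠ j') :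
    ((SD N N1 N2 N3).filter fun ξ => ξ i = k ∧ ξ j = l).card
      = ((SD N N1 N2 N3).filter fun ξ => ξ i' = k ∧ ξ j' = l).card := by
  obtain ⟨σ, hi, hj⟩ := exists_perm hij hij'
  have hsi : σ.symm i' = i := by rw [← hi, Equiv.symm_apply_apply]
  have hsj : σ.symm j' = j := by rw [← hj, Equiv.symm_apply_apply]
  apply Finset.card_nbij' (fun ξ => ξ ∘ σ.symm) (fun ξ => ξ ∘ σ)
  · intro ξ hξ
    simp only [Finset.mem_coe, mem_filter] at hξ ⊢
    refine ⟨comp_mem_SD _ hξ.1, ?_, ?_⟩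
    · show ξ (σ.symm i') = k
      rw [hsi]; exact hξ.2.1
    · show ξ (σ.symm j') = l
      rw [hsj]; exact hξ.2.2
  · intro ξ hξ
    simp only [Finset.mem_coe, mem_filter] at hξ ⊢
    refine ⟨comp_mem_SD _ hξ.1, ?_, ?_⟩
    · show ξ (σ i) = k
      rw [hi]; exact hξ.2.1
    · show ξ (σ j) = l
      rw [hj]; exact hξ.2.2
  · intro ξ _; funext x; simp [Function.comp]
  · intro ξ _; funext x; simp [Function.comp]

lemma sum_offDiag_add_diag {M : Type*} [AddCommMonoid M] (F : Fin N → Fin N → M) :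
    (∑ p ∈ univ.offDiag, F p.1 p.2) + (∑ i : Fin N, F i i)
      = ∑ i : Fin N, ∑ j : Fin N, F i j := by
  classical
  have h0 : (univ : Finset (Fin N)).offDiag
      = (univ ×ˢ univ).filter (fun p : Fin N × Fin N => p.1 ≠ p.2) := by
    ext p; simp [Finset.mem_offDiag]
  have h1 : (∑ p ∈ (univ ×ˢ univ).filter (fun p : Fin N × Fin N => ¬ p.1 ≠ p.2),
      F p.1 p.2) = ∑ i : Fin N, F i i := by
    apply Finset.sum_nbij' (fun p => p.1) (fun i => (i, i))
    · intro p hp; simp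
    · intro i _; simp
    · intro p hp; simp only [mem_filter, not_not] at hp; ext <;> simp [hp.2]
    · intro i _; rfl
    · intro p hp; simp only [mem_filter, not_not] at hp; rw [hp.2]
  rw [h0, ← h1, Finset.sum_filter_add_sum_filter_not (univ ×ˢ univ)
    (fun p : Fin N × Fin N => p.1 ≠ p.2) (fun p => F p.1 p.2), ← Finset.sum_product']

lemma T_eq {ξ : Fin N → Fin 3} (h : ξ ∈ SD N N1 N2 N3) (k l : Fin 3) :
    (∑ i : Fin N, ∑ j : Fin N, if ξ i = k ∧ ξ j = l then 1 else 0)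
      = cnt N1 N2 N3 k * cnt N1 N2 N3 l := by
  have he : ∀ i j : Fin N, (if ξ i = k ∧ ξ j = l then (1:ℕ) else 0)
      = (if ξ i = k then 1 else 0) * (if ξ j = l then 1 else 0) := by
    intro i j; by_cases h1 : ξ i = k <;> by_cases h2 : ξ j = l <;> simp [h1, h2]
  simp_rw [he, ← Finset.mul_sum]
  rw [← Finset.sum_mul, ← Finset.card_filter, ← Finset.card_filter,
    card_cnt h, card_cnt h]

lemma D_eq {ξ : Fin N → Fin 3} (h : ξ ∈ SD N N1 N2 N3) (k l : Fin 3) :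
    (∑ i : Fin N, if ξ i = k ∧ ξ i = l then 1 else 0)
      = if k = l then cnt N1 N2 N3 k else 0 := by
  by_cases hkl : k = l
  · subst hkl
    rw [if_pos rfl]
    simp only [and_self]
    rw [← Finset.card_filter, card_cnt h]
  · rw [if_neg hkl]
    apply Finset.sum_eq_zero
    intro i _
    rw [if_neg]
    rintro ⟨h1, h2⟩; exact hkl (h1 ▸ h2 ▸ rfl)

lemma count2 (k l : Fin 3) {i j : Fin N} (hij : i ≠ j) :
    N * (N - 1) * ((SD N N1 N2 N3).filter fun ξ => ξ i = k ∧ ξ j = l).card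
      + (SD N N1 N2 N3).card * (if k = l then cnt N1 N2 N3 k else 0)
      = (SD N N1 N2 N3).card * (cnt N1 N2 N3 k * cnt N1 N2 N3 l) := by
  classical
  have hconst : ∀ p ∈ (univ : Finset (Fin N)).offDiag,
      ((SD N N1 N2 N3).filter fun ξ => ξ p.1 = k ∧ ξ p.2 = l).card
        = ((SD N N1 N2 N3).filter fun ξ => ξ i = k ∧ ξ j = l).card := by
    intro p hp
    rw [Finset.mem_offDiag] at hp
    exact count2_const k l hp.2.2 hij
  have hsum : ∑ p ∈ (univ : Finset (Fin N)).offDiag,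
      ((SD N N1 N2 N3).filter fun ξ => ξ p.1 = k ∧ ξ p.2 = l).card
      = N * (N - 1) * ((SD N N1 N2 N3).filter fun ξ => ξ i = k ∧ ξ j = l).card := by
    rw [Finset.sum_congr rfl hconst, Finset.sum_const, smul_eq_mul, Finset.offDiag_card,
      Finset.card_univ, Fintype.card_fin]
    congr 1
    cases N with
    | zero => rfl
    | succ n => rw [Nat.succ_sub_one, Nat.succ_mul, Nat.add_sub_cancel, Nat.mul_comm]
  have hswap : ∑ p ∈ (univ : Finset (Fin N)).offDiag,
      ((SD N N1 N2 N3).filter fun ξ => ξ p.1 = k ∧ ξ p.2 = l).card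
      = ∑ ξ ∈ SD N N1 N2 N3, ∑ p ∈ (univ : Finset (Fin N)).offDiag,
          (if ξ p.1 = k ∧ ξ p.2 = l then 1 else 0) := by
    rw [Finset.sum_congr rfl fun p (_ : p ∈ (univ : Finset (Fin N)).offDiag) =>
      (Finset.card_filter _ (SD N N1 N2 N3) : _)]
    exact Finset.sum_comm
  have hdiag : ∑ ξ ∈ SD N N1 N2 N3,
      (∑ i' : Fin N, if ξ i' = k ∧ ξ i' = l then 1 else 0)
      = (SD N N1 N2 N3).card * (if k = l then cnt N1 N2 N3 k else 0) := by
    rw [Finset.sum_congr rfl fun ξ hξ => D_eq hξ k l, Finset.sum_const, smul_eq_mul]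
  have htot : ∑ ξ ∈ SD N N1 N2 N3,
      (∑ i' : Fin N, ∑ j' : Fin N, if ξ i' = k ∧ ξ j' = l then 1 else 0)
      = (SD N N1 N2 N3).card * (cnt N1 N2 N3 k * cnt N1 N2 N3 l) := by
    rw [Finset.sum_congr rfl fun ξ hξ => T_eq hξ k l, Finset.sum_const, smul_eq_mul]
  rw [← hsum, hswap, ← hdiag, ← htot, ← Finset.sum_add_distrib]
  exact Finset.sum_congr rfl fun ξ _ =>
    sum_offDiag_add_diag (fun i' j' => if ξ i' = k ∧ ξ j' = l then 1 else 0)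

/-- the design set is nonempty -/
lemma SD_nonempty (hN : N1 + N2 + N3 = N) : (SD N N1 N2 N3).Nonempty := by
  classical
  set ξ0 : Fin N → Fin 3 :=
    fun i => if (i:ℕ) < N1 then 0 else if (i:ℕ) < N1 + N2 then 1 else 2 with hxi
  refine ⟨ξ0, ?_⟩
  simp only [SD, mem_filter, mem_univ, true_and]
  have key : ∀ a m : ℕ, a + m ≤ N →
      (univ.filter fun i : Fin N => a ≤ (i:ℕ) ∧ (i:ℕ) < a + m).card = m := by
    intro a m h
    have heq : (univ.filter fun i : Fin N => a ≤ (i:ℕ) ∧ (i:ℕ) < a + m).card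
        = (Finset.Ico a (a+m)).card := by
      refine Finset.card_bij (fun (i : Fin N) _ => (i:ℕ)) ?_ ?_ ?_
      · intro x hx
        simp only [mem_filter, mem_univ, true_and] at hx
        rw [Finset.mem_Ico]; exact hx
      · intro x _ y _ hxy; exact Fin.ext hxy
      · intro b hb
        rw [Finset.mem_Ico] at hb
        exact ⟨⟨b, lt_of_lt_of_le hb.2 h⟩, by simp [hb.1, hb.2], rfl⟩
    rw [heq, Nat.card_Ico, Nat.add_sub_cancel_left]
  refine ⟨?_, ?_, ?_⟩
  · have e : (univ.filter fun i : Fin N => ξ0 i = 0)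
        = univ.filter (fun i : Fin N => 0 ≤ (i:ℕ) ∧ (i:ℕ) < 0 + N1) := by
      apply Finset.filter_congr
      intro i _
      simp only [hxi]
      by_cases hc1 : (i:ℕ) < N1
      · exact iff_of_true (by rw [if_pos hc1]) (by omega)
      · refine iff_of_false ?_ (by omega)
        rw [if_neg hc1]
        split_ifs <;> decide
    rw [e]
    exact key 0 N1 (by omega)
  · have e : (univ.filter fun i : Fin N => ξ0 i = 1)
        = univ.filter (fun i : Fin N => N1 ≤ (i:ℕ) ∧ (i:ℕ) < N1 + N2) := by
      apply Finset.filter_congr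
      intro i _
      simp only [hxi]
      by_cases hc1 : (i:ℕ) < N1
      · refine iff_of_false ?_ (by omega)
        rw [if_pos hc1]; decide
      · by_cases hc2 : (i:ℕ) < N1 + N2
        · exact iff_of_true (by rw [if_neg hc1, if_pos hc2]) (by omega)
        · refine iff_of_false ?_ (by omega)
          rw [if_neg hc1, if_neg hc2]; decide
    rw [e]
    exact key N1 N2 (by omega)
  · have e : (univ.filter fun i : Fin N => ξ0 i = 2)
        = univ.filter (fun i : Fin N => N1 + N2 ≤ (i:ℕ) ∧ (i:ℕ) < N1 + N2 + N3) := by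
      apply Finset.filter_congr
      intro i _
      have hi := i.isLt
      simp only [hxi]
      by_cases hc1 : (i:ℕ) < N1
      · refine iff_of_false ?_ (by omega)
        rw [if_pos hc1]; decide
      · by_cases hc2 : (i:ℕ) < N1 + N2
        · refine iff_of_false ?_ (by omega)
          rw [if_neg hc1, if_pos hc2]; decide
        · exact iff_of_true (by rw [if_neg hc1, if_neg hc2]) (by omega)
    rw [e]
    exact key (N1 + N2) N3 (by omega)

/-- real-valued single-group sum -/
lemma sum_single (g : Fin N → ℝ) (k : Fin 3) :
    (N:ℝ) * ∑ ξ ∈ SD N N1 N2 N3, ∑ i ∈ univ.filter (fun i => ξ i = k), g i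
      = ((SD N N1 N2 N3).card : ℝ) * (cnt N1 N2 N3 k : ℝ) * ∑ i, g i := by
  have h1 : ∀ ξ : Fin N → Fin 3, (∑ i ∈ univ.filter (fun i => ξ i = k), g i)
      = ∑ i : Fin N, if ξ i = k then g i else 0 := fun ξ => Finset.sum_filter _ _
  rw [Finset.sum_congr rfl fun ξ _ => h1 ξ, Finset.sum_comm]
  have h2 : ∀ i : Fin N, (∑ ξ ∈ SD N N1 N2 N3, if ξ i = k then g i else 0)
      = (((SD N N1 N2 N3).filter fun ξ => ξ i = k).card : ℝ) * g i := by
    intro i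
    rw [← Finset.sum_filter, Finset.sum_const, nsmul_eq_mul]
  rw [Finset.sum_congr rfl fun i _ => h2 i, Finset.mul_sum, Finset.mul_sum]
  apply Finset.sum_congr rfl
  intro i _
  have hc : (N:ℝ) * (((SD N N1 N2 N3).filter fun ξ => ξ i = k).card : ℝ)
      = ((SD N N1 N2 N3).card : ℝ) * (cnt N1 N2 N3 k : ℝ) := by
    exact_mod_cast congrArg (Nat.cast : ℕ → ℝ) (count1 k i)
  linear_combination g i * hc

/-- real-valued pair sum -/
lemma sum_pair (hN1 : 1 ≤ N) (g h : Fin N → ℝ) (k l : Fin 3) :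
    (N:ℝ) * ((N:ℝ) - 1) * ∑ ξ ∈ SD N N1 N2 N3,
        (∑ i ∈ univ.filter (fun i => ξ i = k), g i)
          * (∑ j ∈ univ.filter (fun j => ξ j = l), h j)
      = ((SD N N1 N2 N3).card : ℝ) *
        ( ((cnt N1 N2 N3 k : ℝ) * (cnt N1 N2 N3 l : ℝ)
              - (if k = l then (cnt N1 N2 N3 k : ℝ) else 0))
            * ((∑ i, g i) * (∑ i, h i) - ∑ i, g i * h i)
          + ((N:ℝ) - 1) * (if k = l then (cnt N1 N2 N3 k : ℝ) else 0)
            * (∑ i, g i * h i) ) := by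
  classical
  -- pointwise expansion
  have hpt : ∀ ξ : Fin N → Fin 3,
      (∑ i ∈ univ.filter (fun i => ξ i = k), g i)
        * (∑ j ∈ univ.filter (fun j => ξ j = l), h j)
      = (∑ p ∈ (univ : Finset (Fin N)).offDiag,
            if ξ p.1 = k ∧ ξ p.2 = l then g p.1 * h p.2 else 0)
        + ∑ i : Fin N, (if ξ i = k ∧ ξ i = l then g i * h i else 0) := by
    intro ξ
    rw [sum_offDiag_add_diag (fun i j => if ξ i = k ∧ ξ j = l then g i * h j else 0)]
    rw [Finset.sum_filter, Finset.sum_filter, Finset.sum_mul_sum]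
    apply Finset.sum_congr rfl; intro i _
    apply Finset.sum_congr rfl; intro j _
    by_cases h1 : ξ i = k <;> by_cases h2 : ξ j = l <;> simp [h1, h2]
  rw [Finset.sum_congr rfl fun ξ _ => hpt ξ, Finset.sum_add_distrib]
  -- swap both double sums
  have hsw1 : (∑ ξ ∈ SD N N1 N2 N3, ∑ p ∈ (univ : Finset (Fin N)).offDiag,
        if ξ p.1 = k ∧ ξ p.2 = l then g p.1 * h p.2 else 0)
      = ∑ p ∈ (univ : Finset (Fin N)).offDiag,
          (((SD N N1 N2 N3).filter fun ξ => ξ p.1 = k ∧ ξ p.2 = l).card : ℝ)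
            * (g p.1 * h p.2) := by
    rw [Finset.sum_comm]
    apply Finset.sum_congr rfl; intro p _
    rw [← Finset.sum_filter, Finset.sum_const, nsmul_eq_mul]
  have hsw2 : (∑ ξ ∈ SD N N1 N2 N3, ∑ i : Fin N,
        if ξ i = k ∧ ξ i = l then g i * h i else 0)
      = ∑ i : Fin N,
          (((SD N N1 N2 N3).filter fun ξ => ξ i = k ∧ ξ i = l).card : ℝ) * (g i * h i) := by
    rw [Finset.sum_comm]
    apply Finset.sum_congr rfl; intro i _
    rw [← Finset.sum_filter, Finset.sum_const, nsmul_eq_mul]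
  rw [hsw1, hsw2, mul_add, Finset.mul_sum, Finset.mul_sum]
  -- diagonal card values
  have hdiagcard : ∀ i : Fin N,
      (N:ℝ) * (((SD N N1 N2 N3).filter fun ξ => ξ i = k ∧ ξ i = l).card : ℝ)
        = ((SD N N1 N2 N3).card : ℝ) * (if k = l then (cnt N1 N2 N3 k : ℝ) else 0) := by
    intro i
    by_cases hkl : k = l
    · subst hkl
      rw [if_pos rfl]
      have : ((SD N N1 N2 N3).filter fun ξ => ξ i = k ∧ ξ i = k)
          = (SD N N1 N2 N3).filter fun ξ => ξ i = k := by
        apply Finset.filter_congr; intro ξ _; simp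
      rw [this]
      exact_mod_cast congrArg (Nat.cast : ℕ → ℝ) (count1 k i)
    · rw [if_neg hkl]
      have : ((SD N N1 N2 N3).filter fun ξ => ξ i = k ∧ ξ i = l) = ∅ := by
        apply Finset.filter_eq_empty_iff.mpr
        intro ξ _
        rintro ⟨ha, hb⟩; exact hkl (ha ▸ hb ▸ rfl)
      rw [this]; simp
  -- off-diagonal card values
  have hoffcard : ∀ p ∈ (univ : Finset (Fin N)).offDiag,
      (N:ℝ) * ((N:ℝ) - 1)
          * (((SD N N1 N2 N3).filter fun ξ => ξ p.1 = k ∧ ξ p.2 = l).card : ℝ)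
        = ((SD N N1 N2 N3).card : ℝ)
            * ((cnt N1 N2 N3 k : ℝ) * (cnt N1 N2 N3 l : ℝ)
               - (if k = l then (cnt N1 N2 N3 k : ℝ) else 0)) := by
    intro p hp
    rw [Finset.mem_offDiag] at hp
    have hc := count2 (N1:=N1) (N2:=N2) (N3:=N3) k l hp.2.2
    have hcast : ((N * (N - 1) * ((SD N N1 N2 N3).filter
          fun ξ => ξ p.1 = k ∧ ξ p.2 = l).card
        + (SD N N1 N2 N3).card * (if k = l then cnt N1 N2 N3 k else 0) : ℕ) : ℝ)
        = (((SD N N1 N2 N3).card * (cnt N1 N2 N3 k * cnt N1 N2 N3 l) : ℕ) : ℝ) := by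
      exact_mod_cast congrArg (Nat.cast : ℕ → ℝ) hc
    push_cast [Nat.cast_sub hN1] at hcast
    linear_combination hcast
  -- assemble
  have e1 : (∑ p ∈ (univ : Finset (Fin N)).offDiag,
        (N:ℝ) * ((N:ℝ) - 1)
          * ((((SD N N1 N2 N3).filter fun ξ => ξ p.1 = k ∧ ξ p.2 = l).card : ℝ)
              * (g p.1 * h p.2)))
      = ((SD N N1 N2 N3).card : ℝ)
          * ((cnt N1 N2 N3 k : ℝ) * (cnt N1 N2 N3 l : ℝ)
              - (if k = l then (cnt N1 N2 N3 k : ℝ) else 0))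
          * ∑ p ∈ (univ : Finset (Fin N)).offDiag, g p.1 * h p.2 := by
    rw [Finset.mul_sum]
    apply Finset.sum_congr rfl
    intro p hp
    linear_combination (g p.1 * h p.2) * hoffcard p hp
  have e2 : (∑ i : Fin N, (N:ℝ) * ((N:ℝ) - 1)
        * ((((SD N N1 N2 N3).filter fun ξ => ξ i = k ∧ ξ i = l).card : ℝ) * (g i * h i)))
      = ((N:ℝ) - 1) * ((SD N N1 N2 N3).card : ℝ)
          * (if k = l then (cnt N1 N2 N3 k : ℝ) else 0) * ∑ i, g i * h i := by
    rw [Finset.mul_sum]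
    apply Finset.sum_congr rfl
    intro i _
    linear_combination ((N:ℝ) - 1) * (g i * h i) * hdiagcard i
  rw [e1, e2]
  have e3 : (∑ p ∈ (univ : Finset (Fin N)).offDiag, g p.1 * h p.2)
      = (∑ i, g i) * (∑ i, h i) - ∑ i, g i * h i := by
    have hod := sum_offDiag_add_diag (fun i j => g i * h j)
    rw [Finset.sum_mul_sum]
    linarith [hod]
  rw [e3]
  ring

end Stmt4Aux

set_option maxHeartbeats 4000000 in
lemma key2 (P n m1 m2 m3 a0 a1 a2 b0 b1 b2 c01 c12 c02 : ℝ)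
    (hP : P ≠ 0) (hn : n ≠ 0) (hn1 : n - 1 ≠ 0)
    (hm1 : m1 ≠ 0) (hm2 : m2 ≠ 0) (hm3 : m3 ≠ 0) :
    P * ((b0 - a0*a0/n)/(n-1)/m1 + (b1 - a1*a1/n)/(n-1)/m2 + (b2 - a2*a2/n)/(n-1)/m3) / P
    - (1/(m2*m2) * (P * ((m2*m2 - m2)*(a1*a1 - b1) + (n-1)*m2*b1) / (n*(n-1)))
      + 1/(m1*m1) * (P * ((m1*m1 - m1)*(a0*a0 - b0) + (n-1)*m1*b0) / (n*(n-1)))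
      + 1/(m3*m3) * (P * ((m3*m3 - m3)*(a2*a2 - b2) + (n-1)*m3*b2) / (n*(n-1)))
      + -(2/(m1*m2)) * (P * ((m1*m2 - 0)*(a0*a1 - c01) + (n-1)*0*c01) / (n*(n-1)))
      + -(2/(m2*m3)) * (P * ((m2*m3 - 0)*(a1*a2 - c12) + (n-1)*0*c12) / (n*(n-1)))
      + 2/(m1*m3) * (P * ((m1*m3 - 0)*(a0*a2 - c02) + (n-1)*0*c02) / (n*(n-1)))
      - 2 * (P * (a1 - a0 - a2)/n/P) * (P * (a1 - a0 - a2)/n)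
      + P * (P * (a1 - a0 - a2)/n/P * (P * (a1 - a0 - a2)/n/P)))/P
    = (b1 + b0 + b2 - 2*c01 - 2*c12 + 2*c02 - (a1 - a0 - a2)*(a1 - a0 - a2)/n)/(n-1)/n := by
  field_simp
  ring

open Stmt4Aux

/-- Under the three-group completely randomized design, the expected value
of the Neyman-type variance estimator `V̂ = s1²/N1 + s2²/N2 + s3²/N3` exceeds the true
randomization variance of `τ̂` by exactly `S_τ²/N ≥ 0`, so the estimator is conservative. -/
theorem stmt4 (N N1 N2 N3 : ℕ) (hN : N1 + N2 + N3 = N)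
    (h1 : 2 ≤ N1) (h2 : 2 ≤ N2) (h3 : 2 ≤ N3)
    (Y : Fin N → Fin 3 → ℝ)
    (S : Finset (Fin N → Fin 3))
    (hS : S = univ.filter (fun ξ : Fin N → Fin 3 =>
      (univ.filter (fun i => ξ i = 0)).card = N1 ∧
      (univ.filter (fun i => ξ i = 1)).card = N2 ∧
      (univ.filter (fun i => ξ i = 2)).card = N3))
    (tauhat : (Fin N → Fin 3) → ℝ)
    (htauhat : ∀ ξ, tauhat ξ =
      (∑ i ∈ univ.filter (fun i => ξ i = 1), Y i 1) / (N2 : ℝ)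
      - (∑ i ∈ univ.filter (fun i => ξ i = 0), Y i 0) / (N1 : ℝ)
      - (∑ i ∈ univ.filter (fun i => ξ i = 2), Y i 2) / (N3 : ℝ))
    -- group-k sample mean and sample variance of the observed outcomes
    (ybar : (Fin N → Fin 3) → Fin 3 → ℝ)
    (hybar : ∀ ξ k, ybar ξ k =
      (∑ i ∈ univ.filter (fun i => ξ i = k), Y i k)
        / ((univ.filter (fun i => ξ i = k)).card : ℝ))
    (s2 : (Fin N → Fin 3) → Fin 3 → ℝ)
    (hs2 : ∀ ξ k, s2 ξ k =
      (∑ i ∈ univ.filter (fun i => ξ i = k), (Y i k - ybar ξ k) ^ 2)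
        / (((univ.filter (fun i => ξ i = k)).card : ℝ) - 1))
    (Vhat : (Fin N → Fin 3) → ℝ)
    (hVhat : ∀ ξ, Vhat ξ = s2 ξ 0 / (N1 : ℝ) + s2 ξ 1 / (N2 : ℝ) + s2 ξ 2 / (N3 : ℝ))
    (τ : ℝ) (hτ : τ = (∑ i, (Y i 1 - Y i 0 - Y i 2)) / (N : ℝ))
    (Sτ2 : ℝ)
    (hSτ2 : Sτ2 = (∑ i, (Y i 1 - Y i 0 - Y i 2 - τ) ^ 2) / ((N : ℝ) - 1))
    -- randomization variance of τ̂ (deviation from its randomization mean)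
    (Vtauhat : ℝ)
    (hV : Vtauhat = (∑ ξ ∈ S, (tauhat ξ - (∑ ζ ∈ S, tauhat ζ) / (S.card : ℝ)) ^ 2)
      / (S.card : ℝ)) :
    (∑ ξ ∈ S, Vhat ξ) / (S.card : ℝ) - Vtauhat = Sτ2 / (N : ℝ)
      ∧ 0 ≤ Sτ2 / (N : ℝ) := by
  classical
  have hSD : S = SD N N1 N2 N3 := hS
  subst hSD
  subst hV
  -- nonzero facts
  have hn0 : (N:ℝ) ≠ 0 := Nat.cast_ne_zero.mpr (by omega)
  have hn1 : (N:ℝ) - 1 ≠ 0 := by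
    have : (1:ℝ) < (N:ℝ) := by exact_mod_cast (show 1 < N by omega)
    exact ne_of_gt (by linarith)
  have hm1 : (N1:ℝ) ≠ 0 := Nat.cast_ne_zero.mpr (by omega)
  have hm2 : (N2:ℝ) ≠ 0 := Nat.cast_ne_zero.mpr (by omega)
  have hm3 : (N3:ℝ) ≠ 0 := Nat.cast_ne_zero.mpr (by omega)
  have hm1' : (N1:ℝ) - 1 ≠ 0 := by
    have : (1:ℝ) < (N1:ℝ) := by exact_mod_cast (show 1 < N1 by omega)
    exact ne_of_gt (by linarith)
  have hm2' : (N2:ℝ) - 1 ≠ 0 := by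
    have : (1:ℝ) < (N2:ℝ) := by exact_mod_cast (show 1 < N2 by omega)
    exact ne_of_gt (by linarith)
  have hm3' : (N3:ℝ) - 1 ≠ 0 := by
    have : (1:ℝ) < (N3:ℝ) := by exact_mod_cast (show 1 < N3 by omega)
    exact ne_of_gt (by linarith)
  have hPpos : 0 < (SD N N1 N2 N3).card := Finset.card_pos.mpr (SD_nonempty hN)
  have hP0 : ((SD N N1 N2 N3).card : ℝ) ≠ 0 := Nat.cast_ne_zero.mpr hPpos.ne'
  -- value lemmas
  have hx : ∀ k : Fin 3,
      (∑ ξ ∈ SD N N1 N2 N3, ∑ i ∈ univ.filter (fun i => ξ i = k), Y i k)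
      = ((SD N N1 N2 N3).card : ℝ) * (cnt N1 N2 N3 k : ℝ) * (∑ i, Y i k) / (N:ℝ) := by
    intro k
    rw [eq_div_iff hn0, mul_comm]
    exact sum_single (fun i => Y i k) k
  have hq : ∀ k : Fin 3,
      (∑ ξ ∈ SD N N1 N2 N3, ∑ i ∈ univ.filter (fun i => ξ i = k), (Y i k)^2)
      = ((SD N N1 N2 N3).card : ℝ) * (cnt N1 N2 N3 k : ℝ) * (∑ i, (Y i k)^2) / (N:ℝ) := by
    intro k
    rw [eq_div_iff hn0, mul_comm]
    exact sum_single (fun i => (Y i k)^2) k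
  have hxx : ∀ k l : Fin 3, (∑ ξ ∈ SD N N1 N2 N3,
        (∑ i ∈ univ.filter (fun i => ξ i = k), Y i k)
          * (∑ j ∈ univ.filter (fun j => ξ j = l), Y j l))
      = ((SD N N1 N2 N3).card : ℝ) *
          (((cnt N1 N2 N3 k : ℝ) * (cnt N1 N2 N3 l : ℝ)
              - (if k = l then (cnt N1 N2 N3 k : ℝ) else 0))
              * ((∑ i, Y i k) * (∑ i, Y i l) - ∑ i, Y i k * Y i l)
            + ((N:ℝ) - 1) * (if k = l then (cnt N1 N2 N3 k : ℝ) else 0)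
              * (∑ i, Y i k * Y i l))
          / ((N:ℝ) * ((N:ℝ) - 1)) := by
    intro k l
    rw [eq_div_iff (mul_ne_zero hn0 hn1), mul_comm]
    exact sum_pair (by omega) (fun i => Y i k) (fun i => Y i l) k l
  have hx0 := hx 0; have hx1 := hx 1; have hx2 := hx 2
  simp only [cnt_zero, cnt_one, cnt_two] at hx0 hx1 hx2
  have hq0 := hq 0; have hq1 := hq 1; have hq2 := hq 2
  simp only [cnt_zero, cnt_one, cnt_two] at hq0 hq1 hq2
  have hbk : ∀ k : Fin 3, (∑ i, Y i k * Y i k) = ∑ i, (Y i k)^2 :=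
    fun k => Finset.sum_congr rfl fun i _ => (pow_two (Y i k)).symm
  have hxx00 := hxx 0 0; have hxx11 := hxx 1 1; have hxx22 := hxx 2 2
  have hxx01 := hxx 0 1; have hxx12 := hxx 1 2; have hxx02 := hxx 0 2
  simp only [cnt_zero, cnt_one, cnt_two, if_true, eq_self_iff_true, hbk 0, hbk 1, hbk 2]
    at hxx00 hxx11 hxx22
  rw [if_neg (show ¬(0:Fin 3) = 1 by decide)] at hxx01
  rw [if_neg (show ¬(1:Fin 3) = 2 by decide)] at hxx12
  rw [if_neg (show ¬(0:Fin 3) = 2 by decide)] at hxx02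
  simp only [cnt_zero, cnt_one, cnt_two] at hxx01 hxx12 hxx02
  -- pointwise sample variance
  have hs2' : ∀ ξ ∈ SD N N1 N2 N3, ∀ k : Fin 3,
      s2 ξ k = ((∑ i ∈ univ.filter (fun i => ξ i = k), (Y i k)^2)
        - (∑ i ∈ univ.filter (fun i => ξ i = k), Y i k)
            * (∑ i ∈ univ.filter (fun i => ξ i = k), Y i k) / (cnt N1 N2 N3 k : ℝ))
        / ((cnt N1 N2 N3 k : ℝ) - 1) := by
    intro ξ hξ k
    have hcard := card_cnt hξ k
    have hck : 2 ≤ cnt N1 N2 N3 k := by fin_cases k <;> simpa [cnt]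
    have hck0 : (cnt N1 N2 N3 k : ℝ) ≠ 0 := Nat.cast_ne_zero.mpr (by omega)
    have hyb : ybar ξ k
        = (∑ i ∈ univ.filter (fun i => ξ i = k), Y i k) / (cnt N1 N2 N3 k : ℝ) := by
      rw [hybar, hcard]
    have hnum : (∑ i ∈ univ.filter (fun i => ξ i = k), (Y i k - ybar ξ k)^2)
        = (∑ i ∈ univ.filter (fun i => ξ i = k), (Y i k)^2)
          - 2 * ybar ξ k * (∑ i ∈ univ.filter (fun i => ξ i = k), Y i k)
          + (cnt N1 N2 N3 k : ℝ) * (ybar ξ k)^2 := by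
      have hptw : ∀ i, (Y i k - ybar ξ k)^2
          = (Y i k)^2 - 2 * ybar ξ k * (Y i k) + (ybar ξ k)^2 := fun i => by ring
      rw [Finset.sum_congr rfl fun i _ => hptw i, Finset.sum_add_distrib,
        Finset.sum_sub_distrib, ← Finset.mul_sum, Finset.sum_const, hcard, nsmul_eq_mul]
    rw [hs2 ξ k, hcard, hnum, hyb]
    congr 1
    field_simp
    ring
  -- pointwise Vhat
  have hVhat' : ∀ ξ ∈ SD N N1 N2 N3, Vhat ξ =
      (1/(((N1:ℝ)-1)*(N1:ℝ))) * (∑ i ∈ univ.filter (fun i => ξ i = 0), (Y i 0)^2)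
      + (-(1/(((N1:ℝ)-1)*(N1:ℝ)*(N1:ℝ))))
          * ((∑ i ∈ univ.filter (fun i => ξ i = 0), Y i 0)
              * (∑ j ∈ univ.filter (fun j => ξ j = 0), Y j 0))
      + (1/(((N2:ℝ)-1)*(N2:ℝ))) * (∑ i ∈ univ.filter (fun i => ξ i = 1), (Y i 1)^2)
      + (-(1/(((N2:ℝ)-1)*(N2:ℝ)*(N2:ℝ))))
          * ((∑ i ∈ univ.filter (fun i => ξ i = 1), Y i 1)
              * (∑ j ∈ univ.filter (fun j => ξ j = 1), Y j 1))
      + (1/(((N3:ℝ)-1)*(N3:ℝ))) * (∑ i ∈ univ.filter (fun i => ξ i = 2), (Y i 2)^2)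
      + (-(1/(((N3:ℝ)-1)*(N3:ℝ)*(N3:ℝ))))
          * ((∑ i ∈ univ.filter (fun i => ξ i = 2), Y i 2)
              * (∑ j ∈ univ.filter (fun j => ξ j = 2), Y j 2)) := by
    intro ξ hξ
    rw [hVhat ξ, hs2' ξ hξ 0, hs2' ξ hξ 1, hs2' ξ hξ 2]
    simp only [cnt_zero, cnt_one, cnt_two]
    field_simp
    ring
  -- closed form for ∑ Vhat
  have hVsum : (∑ ξ ∈ SD N N1 N2 N3, Vhat ξ)
      = ((SD N N1 N2 N3).card : ℝ) *
        ( ((∑ i, (Y i 0)^2) - (∑ i, Y i 0)*(∑ i, Y i 0)/(N:ℝ))/((N:ℝ)-1)/(N1:ℝ)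
        + ((∑ i, (Y i 1)^2) - (∑ i, Y i 1)*(∑ i, Y i 1)/(N:ℝ))/((N:ℝ)-1)/(N2:ℝ)
        + ((∑ i, (Y i 2)^2) - (∑ i, Y i 2)*(∑ i, Y i 2)/(N:ℝ))/((N:ℝ)-1)/(N3:ℝ) ) := by
    rw [Finset.sum_congr rfl hVhat']
    simp only [Finset.sum_add_distrib, ← Finset.mul_sum]
    rw [hq0, hq1, hq2, hxx00, hxx11, hxx22]
    field_simp
    ring
  -- pointwise tauhat product
  have htt : ∀ ξ : Fin N → Fin 3, tauhat ξ * tauhat ξ =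
      (1/((N2:ℝ)*(N2:ℝ)))
        * ((∑ i ∈ univ.filter (fun i => ξ i = 1), Y i 1)
            * (∑ j ∈ univ.filter (fun j => ξ j = 1), Y j 1))
      + (1/((N1:ℝ)*(N1:ℝ)))
        * ((∑ i ∈ univ.filter (fun i => ξ i = 0), Y i 0)
            * (∑ j ∈ univ.filter (fun j => ξ j = 0), Y j 0))
      + (1/((N3:ℝ)*(N3:ℝ)))
        * ((∑ i ∈ univ.filter (fun i => ξ i = 2), Y i 2)
            * (∑ j ∈ univ.filter (fun j => ξ j = 2), Y j 2))
      + (-(2/((N1:ℝ)*(N2:ℝ))))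
        * ((∑ i ∈ univ.filter (fun i => ξ i = 0), Y i 0)
            * (∑ j ∈ univ.filter (fun j => ξ j = 1), Y j 1))
      + (-(2/((N2:ℝ)*(N3:ℝ))))
        * ((∑ i ∈ univ.filter (fun i => ξ i = 1), Y i 1)
            * (∑ j ∈ univ.filter (fun j => ξ j = 2), Y j 2))
      + (2/((N1:ℝ)*(N3:ℝ)))
        * ((∑ i ∈ univ.filter (fun i => ξ i = 0), Y i 0)
            * (∑ j ∈ univ.filter (fun j => ξ j = 2), Y j 2)) := by
    intro ξ
    rw [htauhat ξ]
    ring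
  -- closed form for ∑ tauhat * tauhat
  have hT2 : (∑ ξ ∈ SD N N1 N2 N3, tauhat ξ * tauhat ξ)
      = ∑ ξ ∈ SD N N1 N2 N3, (
      (1/((N2:ℝ)*(N2:ℝ)))
        * ((∑ i ∈ univ.filter (fun i => ξ i = 1), Y i 1)
            * (∑ j ∈ univ.filter (fun j => ξ j = 1), Y j 1))
      + (1/((N1:ℝ)*(N1:ℝ)))
        * ((∑ i ∈ univ.filter (fun i => ξ i = 0), Y i 0)
            * (∑ j ∈ univ.filter (fun j => ξ j = 0), Y j 0))
      + (1/((N3:ℝ)*(N3:ℝ)))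
        * ((∑ i ∈ univ.filter (fun i => ξ i = 2), Y i 2)
            * (∑ j ∈ univ.filter (fun j => ξ j = 2), Y j 2))
      + (-(2/((N1:ℝ)*(N2:ℝ))))
        * ((∑ i ∈ univ.filter (fun i => ξ i = 0), Y i 0)
            * (∑ j ∈ univ.filter (fun j => ξ j = 1), Y j 1))
      + (-(2/((N2:ℝ)*(N3:ℝ))))
        * ((∑ i ∈ univ.filter (fun i => ξ i = 1), Y i 1)
            * (∑ j ∈ univ.filter (fun j => ξ j = 2), Y j 2))
      + (2/((N1:ℝ)*(N3:ℝ)))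
        * ((∑ i ∈ univ.filter (fun i => ξ i = 0), Y i 0)
            * (∑ j ∈ univ.filter (fun j => ξ j = 2), Y j 2))) :=
    Finset.sum_congr rfl fun ξ _ => htt ξ
  -- sum of tauhat
  have hT1 : (∑ ζ ∈ SD N N1 N2 N3, tauhat ζ)
      = ((SD N N1 N2 N3).card : ℝ)
          * ((∑ i, Y i 1) - (∑ i, Y i 0) - (∑ i, Y i 2)) / (N:ℝ) := by
    rw [Finset.sum_congr rfl fun ζ _ => htauhat ζ]
    rw [Finset.sum_sub_distrib, Finset.sum_sub_distrib, ← Finset.sum_div,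
      ← Finset.sum_div, ← Finset.sum_div, hx0, hx1, hx2]
    field_simp
  -- closed form for Sτ2
  have hsum1 : (∑ i, (Y i 1 - Y i 0 - Y i 2))
      = (∑ i, Y i 1) - (∑ i, Y i 0) - (∑ i, Y i 2) := by
    rw [Finset.sum_sub_distrib, Finset.sum_sub_distrib]
  have hτc : τ = ((∑ i, Y i 1) - (∑ i, Y i 0) - (∑ i, Y i 2)) / (N:ℝ) := by
    rw [hτ, hsum1]
  have hpt : ∀ i, (Y i 1 - Y i 0 - Y i 2 - τ)^2
      = (Y i 1)^2 + (Y i 0)^2 + (Y i 2)^2 + (-2)*(Y i 0 * Y i 1)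
        + (-2)*(Y i 1 * Y i 2) + 2*(Y i 0 * Y i 2)
        + (-(2*τ))*(Y i 1) + (2*τ)*(Y i 0) + (2*τ)*(Y i 2) + τ^2 := fun i => by ring
  have hS2c : Sτ2 = ((∑ i, (Y i 1)^2) + (∑ i, (Y i 0)^2) + (∑ i, (Y i 2)^2)
      - 2*(∑ i, Y i 0 * Y i 1) - 2*(∑ i, Y i 1 * Y i 2) + 2*(∑ i, Y i 0 * Y i 2)
      - (((∑ i, Y i 1) - (∑ i, Y i 0) - (∑ i, Y i 2))
          * ((∑ i, Y i 1) - (∑ i, Y i 0) - (∑ i, Y i 2)))/(N:ℝ)) / ((N:ℝ)-1) := by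
    rw [hSτ2, Finset.sum_congr rfl fun i _ => hpt i]
    simp only [Finset.sum_add_distrib, ← Finset.mul_sum, Finset.sum_const,
      Finset.card_univ, Fintype.card_fin, nsmul_eq_mul]
    rw [hτc]
    field_simp
    ring
  constructor
  · -- the main identity
    have hdev : ∀ ξ : Fin N → Fin 3,
        (tauhat ξ - (∑ ζ ∈ SD N N1 N2 N3, tauhat ζ) / ((SD N N1 N2 N3).card : ℝ))^2
        = tauhat ξ * tauhat ξ
          - (2 * ((∑ ζ ∈ SD N N1 N2 N3, tauhat ζ) / ((SD N N1 N2 N3).card : ℝ)))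
              * tauhat ξ
          + ((∑ ζ ∈ SD N N1 N2 N3, tauhat ζ) / ((SD N N1 N2 N3).card : ℝ))
              * ((∑ ζ ∈ SD N N1 N2 N3, tauhat ζ) / ((SD N N1 N2 N3).card : ℝ)) :=
      fun ξ => by ring
    rw [Finset.sum_congr rfl fun ξ _ => hdev ξ]
    rw [Finset.sum_add_distrib, Finset.sum_sub_distrib, ← Finset.mul_sum,
      Finset.sum_const, nsmul_eq_mul, hT2]
    simp only [Finset.sum_add_distrib, ← Finset.mul_sum]
    rw [hxx00, hxx11, hxx22, hxx01, hxx12, hxx02, hT1, hVsum, hS2c]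
    exact key2 _ _ _ _ _ _ _ _ _ _ _ _ _ _ hP0 hn0 hn1 hm1 hm2 hm3
  · -- nonnegativity
    rw [hSτ2]
    apply div_nonneg _ (Nat.cast_nonneg N)
    apply div_nonneg (Finset.sum_nonneg fun i _ => sq_nonneg _)
    have : (1:ℝ) ≤ (N:ℝ) := by exact_mod_cast (show 1 ≤ N by omega)
    linarith
end

section
/- In the three-group completely randomized design, the covariance between the group-1 sample mean ȳ_1 = (1/N1)Σ_{ξ_i=1}𝒴_i(1) and the group-2 sample mean ȳ_2 = (1/N2)Σ_{ξ_i=2}𝒴_i(2) equals −(1/N)·(1/(N−1))Σ_i(𝒴_i(1) − 𝒴̄(1))(𝒴_i(2) − 𝒴̄(2)), i.e., Cov(ȳ_1, ȳ_2) = −S_{12}/N where S_{12} is the finite-population covariance of the two potential outcomes. -/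
open Finset

lemma card_filter_fin (N : ℕ) (p : ℕ → Prop) [DecidablePred p] :
    (univ.filter fun i : Fin N => p i).card = ((range N).filter p).card := by
  refine Finset.card_bij (fun i _ => (i : ℕ)) ?_ ?_ ?_
  · intro a ha; simp only [mem_filter, mem_univ, true_and] at ha
    simp [a.isLt, ha]
  · intro a _ b _ h; exact Fin.ext h
  · intro b hb; simp only [mem_filter, mem_range] at hb
    exact ⟨⟨b, hb.1⟩, by simp [hb.2], rfl⟩

lemma count_comp (N : ℕ) (ξ : Fin N → Fin 3) (σ : Equiv.Perm (Fin N)) (k : Fin 3) :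
    (univ.filter fun i => ξ (σ i) = k).card = (univ.filter fun i => ξ i = k).card := by
  refine Finset.card_bij (fun i _ => σ i) ?_ ?_ ?_
  · intro a ha; simp only [mem_filter, mem_univ, true_and] at ha ⊢; exact ha
  · intro a _ b _ h; exact σ.injective h
  · intro b hb; simp only [mem_filter, mem_univ, true_and] at hb
    exact ⟨σ.symm b, by simp [hb], by simp⟩

lemma exists_perm_pair {N : ℕ} (i j k l : Fin N) (hij : i ≠ j) (hkl : k ≠ l) :
    ∃ σ : Equiv.Perm (Fin N), σ i = k ∧ σ j = l := by
  set σ1 := Equiv.swap i k with hσ1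
  have h1 : σ1 i = k := Equiv.swap_apply_left i k
  have hj' : σ1 j ≠ k := by
    rw [← h1]; exact fun h => hij (σ1.injective h.symm)
  refine ⟨σ1.trans (Equiv.swap (σ1 j) l), ?_, ?_⟩
  · simp only [Equiv.trans_apply, h1]
    exact Equiv.swap_apply_of_ne_of_ne hj'.symm hkl
  · simp only [Equiv.trans_apply]
    exact Equiv.swap_apply_left _ _

section Smem
variable {N N1 N2 N3 : ℕ} {S : Finset (Fin N → Fin 3)}
  (hS : S = univ.filter (fun ξ : Fin N → Fin 3 =>
      (univ.filter (fun i => ξ i = 0)).card = N1 ∧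
      (univ.filter (fun i => ξ i = 1)).card = N2 ∧
      (univ.filter (fun i => ξ i = 2)).card = N3))

include hS

lemma memS_comp (ξ : Fin N → Fin 3) (σ : Equiv.Perm (Fin N)) (h : ξ ∈ S) :
    (ξ ∘ σ) ∈ S := by
  subst hS
  simp only [mem_filter, mem_univ, true_and, Function.comp] at h ⊢
  simpa only [count_comp] using h

lemma B_const (i j k l : Fin N) (hij : i ≠ j) (hkl : k ≠ l) :
    (S.filter fun ξ => ξ i = 0 ∧ ξ j = 1).card
      = (S.filter fun ξ => ξ k = 0 ∧ ξ l = 1).card := by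
  obtain ⟨σ, hk, hl⟩ := exists_perm_pair k l i j hkl hij
  refine Finset.card_bij (fun ξ _ => ξ ∘ σ) ?_ ?_ ?_
  · intro ξ hξ
    simp only [mem_filter] at hξ ⊢
    exact ⟨memS_comp hS ξ σ hξ.1, by simpa [Function.comp, hk, hl] using hξ.2⟩
  · intro a _ b _ h
    funext x
    have := congrFun h (σ.symm x)
    simpa using this
  · intro η hη
    simp only [mem_filter] at hη
    refine ⟨η ∘ (σ.symm : Equiv.Perm (Fin N)), ?_, ?_⟩
    · simp only [mem_filter]
      refine ⟨memS_comp hS η σ.symm hη.1, ?_⟩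
      constructor
      · show η (σ.symm i) = 0
        rw [← hk]; simpa using hη.2.1
      · show η (σ.symm j) = 1
        rw [← hl]; simpa using hη.2.2
    · funext x; simp [Function.comp]


lemma A_const (k : Fin 3) (i j : Fin N) :
    (S.filter fun ξ => ξ i = k).card = (S.filter fun ξ => ξ j = k).card := by
  set σ := Equiv.swap j i with hσ
  have hji : σ j = i := Equiv.swap_apply_left j i
  refine Finset.card_bij (fun ξ _ => ξ ∘ σ) ?_ ?_ ?_
  · intro ξ hξ
    simp only [mem_filter] at hξ ⊢
    exact ⟨memS_comp hS ξ σ hξ.1, by simpa [Function.comp, hji] using hξ.2⟩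
  · intro a _ b _ h
    funext x
    have := congrFun h (σ.symm x)
    simpa using this
  · intro η hη
    simp only [mem_filter] at hη
    refine ⟨η ∘ (σ.symm : Equiv.Perm (Fin N)), ?_, ?_⟩
    · simp only [mem_filter]
      refine ⟨memS_comp hS η σ.symm hη.1, ?_⟩
      show η (σ.symm i) = k
      rw [← hji]; simpa using hη.2
    · funext x; simp [Function.comp]

lemma A_sum (k : Fin 3) (M : ℕ) (hM : ∀ ξ ∈ S, (univ.filter fun i => ξ i = k).card = M) :
    ∑ i : Fin N, (S.filter fun ξ => ξ i = k).card = M * S.card := by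
  have h1 : ∀ i : Fin N, (S.filter fun ξ => ξ i = k).card
      = ∑ ξ ∈ S, (if ξ i = k then 1 else 0) := by
    intro i; rw [Finset.card_filter]
  calc ∑ i : Fin N, (S.filter fun ξ => ξ i = k).card
      = ∑ i : Fin N, ∑ ξ ∈ S, (if ξ i = k then 1 else 0) := by
        exact Finset.sum_congr rfl fun i _ => h1 i
    _ = ∑ ξ ∈ S, ∑ i : Fin N, (if ξ i = k then 1 else 0) := Finset.sum_comm
    _ = ∑ ξ ∈ S, M := by
        refine Finset.sum_congr rfl fun ξ hξ => ?_
        rw [← Finset.card_filter]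
        exact hM ξ hξ
    _ = M * S.card := by rw [Finset.sum_const, smul_eq_mul, mul_comm]

lemma B_sum : ∑ i : Fin N, ∑ j : Fin N,
    (S.filter fun ξ => ξ i = 0 ∧ ξ j = 1).card = N1 * N2 * S.card := by
  have h1 : ∀ i j : Fin N, (S.filter fun ξ => ξ i = 0 ∧ ξ j = 1).card
      = ∑ ξ ∈ S, (if ξ i = 0 then 1 else 0) * (if ξ j = 1 then 1 else 0) := by
    intro i j; rw [Finset.card_filter]
    refine Finset.sum_congr rfl fun ξ _ => ?_
    by_cases hA : ξ i = 0 <;> by_cases hB : ξ j = 1 <;> simp [hA, hB]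
  calc ∑ i : Fin N, ∑ j : Fin N, (S.filter fun ξ => ξ i = 0 ∧ ξ j = 1).card
      = ∑ i : Fin N, ∑ j : Fin N, ∑ ξ ∈ S,
          (if ξ i = 0 then 1 else 0) * (if ξ j = 1 then 1 else 0) := by
        exact Finset.sum_congr rfl fun i _ => Finset.sum_congr rfl fun j _ => h1 i j
    _ = ∑ i : Fin N, ∑ ξ ∈ S, ∑ j : Fin N,
          (if ξ i = 0 then 1 else 0) * (if ξ j = 1 then 1 else 0) := by
        exact Finset.sum_congr rfl fun i _ => Finset.sum_comm
    _ = ∑ ξ ∈ S, ∑ i : Fin N, ∑ j : Fin N,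
          (if ξ i = 0 then 1 else 0) * (if ξ j = 1 then 1 else 0) := Finset.sum_comm
    _ = ∑ ξ ∈ S, N1 * N2 := by
        refine Finset.sum_congr rfl fun ξ hξ => ?_
        rw [hS, mem_filter] at hξ
        rw [← Finset.sum_mul_sum]
        rw [← Finset.card_filter, ← Finset.card_filter]
        rw [hξ.2.1, hξ.2.2.1]
    _ = N1 * N2 * S.card := by rw [Finset.sum_const, smul_eq_mul, mul_comm]

lemma S_nonempty (hN : N1 + N2 + N3 = N) : S.Nonempty := by
  classical
  set ξ0 : Fin N → Fin 3 :=
    fun i => if (i : ℕ) < N1 then 0 else if (i : ℕ) < N1 + N2 then 1 else 2 with hξ0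
  refine ⟨ξ0, ?_⟩
  rw [hS, mem_filter]
  refine ⟨mem_univ _, ?_, ?_, ?_⟩
  · have he : (univ.filter fun i : Fin N => ξ0 i = 0)
        = univ.filter fun i : Fin N => (i : ℕ) < N1 := by
      apply filter_congr; intro i _
      simp only [hξ0]
      split_ifs with hc1 hc2 <;> simp_all <;> decide
    rw [he, card_filter_fin N (fun k => k < N1)]
    have h2 : (range N).filter (fun k => k < N1) = range N1 := by
      ext k; simp only [mem_filter, mem_range]; omega
    rw [h2, card_range]
  · have he : (univ.filter fun i : Fin N => ξ0 i = 1)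
        = univ.filter fun i : Fin N => (¬ (i : ℕ) < N1 ∧ (i : ℕ) < N1 + N2) := by
      apply filter_congr; intro i _
      simp only [hξ0]
      split_ifs with hc1 hc2 <;> simp_all <;> decide
    rw [he, card_filter_fin N (fun k => ¬ k < N1 ∧ k < N1 + N2)]
    have h2 : (range N).filter (fun k => ¬ k < N1 ∧ k < N1 + N2) = Finset.Ico N1 (N1 + N2) := by
      ext k; simp only [mem_filter, mem_range, Finset.mem_Ico]; omega
    rw [h2, Nat.card_Ico]; omega
  · have he : (univ.filter fun i : Fin N => ξ0 i = 2)
        = univ.filter fun i : Fin N => (¬ (i : ℕ) < N1 ∧ ¬ (i : ℕ) < N1 + N2) := by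
      apply filter_congr; intro i _
      simp only [hξ0]
      split_ifs with hc1 hc2 <;> simp_all <;> decide
    rw [he, card_filter_fin N (fun k => ¬ k < N1 ∧ ¬ k < N1 + N2)]
    have h2 : (range N).filter (fun k => ¬ k < N1 ∧ ¬ k < N1 + N2) = Finset.Ico (N1 + N2) N := by
      ext k; simp only [mem_filter, mem_range, Finset.mem_Ico]; omega
    rw [h2, Nat.card_Ico]; omega

end Smem

/-- In the three-group completely randomized design, the covariance
between the group-1 and group-2 sample means equals `−S₁₂/N`, where `S₁₂` is the
finite-population covariance of the two potential outcomes. -/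
theorem stmt16 (N N1 N2 N3 : ℕ) (hN : N1 + N2 + N3 = N) (hN2 : 2 ≤ N)
    (h1 : 0 < N1) (h2 : 0 < N2) (h3 : 0 < N3)
    (Y : Fin N → Fin 3 → ℝ)
    (S : Finset (Fin N → Fin 3))
    (hS : S = univ.filter (fun ξ : Fin N → Fin 3 =>
      (univ.filter (fun i => ξ i = 0)).card = N1 ∧
      (univ.filter (fun i => ξ i = 1)).card = N2 ∧
      (univ.filter (fun i => ξ i = 2)).card = N3))
    (ybar1 ybar2 : (Fin N → Fin 3) → ℝ)
    (hybar1 : ∀ ξ, ybar1 ξ = (∑ i ∈ univ.filter (fun i => ξ i = 0), Y i 0) / (N1 : ℝ))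
    (hybar2 : ∀ ξ, ybar2 ξ = (∑ i ∈ univ.filter (fun i => ξ i = 1), Y i 1) / (N2 : ℝ))
    (Ybar : Fin 3 → ℝ) (hYbar : ∀ k, Ybar k = (∑ i, Y i k) / (N : ℝ))
    (S12 : ℝ)
    (hS12 : S12 = (∑ i, (Y i 0 - Ybar 0) * (Y i 1 - Ybar 1)) / ((N : ℝ) - 1)) :
    (∑ ξ ∈ S, (ybar1 ξ - Ybar 0) * (ybar2 ξ - Ybar 1)) / (S.card : ℝ)
      = -S12 / (N : ℝ) := by

  classical
  -- basic nonzero facts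
  have hTpos : 0 < S.card := (S_nonempty hS hN).card_pos
  have hT0 : (S.card : ℝ) ≠ 0 := by positivity
  have hNr : (N : ℝ) ≠ 0 := by positivity
  have hN1r : (N1 : ℝ) ≠ 0 := by positivity
  have hN2r : (N2 : ℝ) ≠ 0 := by positivity
  have hNm1 : (N : ℝ) - 1 ≠ 0 := by
    have : (2 : ℝ) ≤ (N : ℝ) := by exact_mod_cast hN2
    nlinarith
  set T : ℝ := (S.card : ℝ) with hT
  set P0 : ℝ := ∑ i, Y i 0 with hP0
  set P1 : ℝ := ∑ i, Y i 1 with hP1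
  set Q : ℝ := ∑ i, Y i 0 * Y i 1 with hQ
  -- A counts
  have hA_nat : ∀ i : Fin N, N * (S.filter fun ξ => ξ i = 0).card = N1 * S.card := by
    intro i
    rw [← A_sum hS 0 N1 (fun ξ hξ => by rw [hS, mem_filter] at hξ; exact hξ.2.1)]
    rw [Finset.sum_congr rfl (fun j (_ : j ∈ univ) => A_const hS 0 j i)]
    rw [Finset.sum_const, Finset.card_univ, Fintype.card_fin, smul_eq_mul]
  have hA_real : ∀ i : Fin N,
      ((S.filter fun ξ => ξ i = 0).card : ℝ) = (N1 : ℝ) * T / N := by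
    intro i
    have := hA_nat i
    have hc : (N : ℝ) * ((S.filter fun ξ => ξ i = 0).card : ℝ)
        = (N1 : ℝ) * T := by rw [hT]; exact_mod_cast this
    field_simp at hc ⊢
    linarith [hc]
  -- B counts
  have hBdiag : ∀ p : Fin N, (S.filter fun ξ => ξ p = 0 ∧ ξ p = 1).card = 0 := by
    intro p
    rw [Finset.card_eq_zero, Finset.filter_eq_empty_iff]
    intro ξ _
    rintro ⟨ha, hb⟩
    rw [ha] at hb
    exact absurd hb (by decide)
  have hB_nat : ∀ i j : Fin N, i ≠ j →
      N * ((N - 1) * (S.filter fun ξ => ξ i = 0 ∧ ξ j = 1).card) = N1 * N2 * S.card := by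
    intro i j hij
    rw [← B_sum hS]
    have hrow : ∀ p : Fin N, ∑ q : Fin N, (S.filter fun ξ => ξ p = 0 ∧ ξ q = 1).card
        = (N - 1) * (S.filter fun ξ => ξ i = 0 ∧ ξ j = 1).card := by
      intro p
      rw [← Finset.add_sum_erase univ _ (mem_univ p), hBdiag p, zero_add]
      rw [Finset.sum_congr rfl (fun q hq => B_const hS p q i j
        (fun h => (Finset.mem_erase.mp hq).1 h.symm) hij)]
      rw [Finset.sum_const, smul_eq_mul, Finset.card_erase_of_mem (mem_univ p),
        Finset.card_univ, Fintype.card_fin]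
    rw [Finset.sum_congr rfl (fun p (_ : p ∈ univ) => hrow p)]
    rw [Finset.sum_const, Finset.card_univ, Fintype.card_fin, smul_eq_mul]
  have hB_real : ∀ i j : Fin N, i ≠ j →
      ((S.filter fun ξ => ξ i = 0 ∧ ξ j = 1).card : ℝ)
        = (N1 : ℝ) * N2 * T / ((N : ℝ) * ((N : ℝ) - 1)) := by
    intro i j hij
    have := hB_nat i j hij
    have hc : (N : ℝ) * (((N : ℝ) - 1) * ((S.filter fun ξ => ξ i = 0 ∧ ξ j = 1).card : ℝ))
        = (N1 : ℝ) * N2 * T := by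
      have h1N : 1 ≤ N := le_trans one_le_two hN2
      calc (N : ℝ) * (((N : ℝ) - 1) * ((S.filter fun ξ => ξ i = 0 ∧ ξ j = 1).card : ℝ))
          = ((N * ((N - 1) * (S.filter fun ξ => ξ i = 0 ∧ ξ j = 1).card) : ℕ) : ℝ) := by
            push_cast [Nat.cast_sub h1N]; ring
        _ = ((N1 * N2 * S.card : ℕ) : ℝ) := by exact_mod_cast this
        _ = (N1 : ℝ) * N2 * T := by rw [hT]; push_cast; ring
    field_simp at hc ⊢
    linarith [hc]
  -- sum of group-1 totals
  have hSa : ∑ ξ ∈ S, (∑ i ∈ univ.filter (fun i => ξ i = 0), Y i 0)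
      = (N1 : ℝ) * T * P0 / N := by
    calc ∑ ξ ∈ S, (∑ i ∈ univ.filter (fun i => ξ i = 0), Y i 0)
        = ∑ ξ ∈ S, ∑ i : Fin N, (if ξ i = 0 then Y i 0 else 0) := by
          exact Finset.sum_congr rfl fun ξ _ => Finset.sum_filter (fun i => ξ i = 0) (fun i => Y i 0)
      _ = ∑ i : Fin N, ∑ ξ ∈ S, (if ξ i = 0 then Y i 0 else 0) := Finset.sum_comm
      _ = ∑ i : Fin N, ((S.filter fun ξ => ξ i = 0).card : ℝ) * Y i 0 := by
          refine Finset.sum_congr rfl fun i _ => ?_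
          rw [← Finset.sum_filter, Finset.sum_const, nsmul_eq_mul]
      _ = ∑ i : Fin N, ((N1 : ℝ) * T / N) * Y i 0 := by
          exact Finset.sum_congr rfl fun i _ => by rw [hA_real i]
      _ = (N1 : ℝ) * T * P0 / N := by rw [← Finset.mul_sum, ← hP0]; ring
  -- group-2 analogue
  have hA1_nat : ∀ i : Fin N, N * (S.filter fun ξ => ξ i = 1).card = N2 * S.card := by
    intro i
    rw [← A_sum hS 1 N2 (fun ξ hξ => by rw [hS, mem_filter] at hξ; exact hξ.2.2.1)]
    rw [Finset.sum_congr rfl (fun j (_ : j ∈ univ) => A_const hS 1 j i)]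
    rw [Finset.sum_const, Finset.card_univ, Fintype.card_fin, smul_eq_mul]
  have hA1_real : ∀ i : Fin N,
      ((S.filter fun ξ => ξ i = 1).card : ℝ) = (N2 : ℝ) * T / N := by
    intro i
    have := hA1_nat i
    have hc : (N : ℝ) * ((S.filter fun ξ => ξ i = 1).card : ℝ)
        = (N2 : ℝ) * T := by rw [hT]; exact_mod_cast this
    field_simp at hc ⊢
    linarith [hc]
  have hSb : ∑ ξ ∈ S, (∑ i ∈ univ.filter (fun i => ξ i = 1), Y i 1)
      = (N2 : ℝ) * T * P1 / N := by
    calc ∑ ξ ∈ S, (∑ i ∈ univ.filter (fun i => ξ i = 1), Y i 1)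
        = ∑ ξ ∈ S, ∑ i : Fin N, (if ξ i = 1 then Y i 1 else 0) := by
          exact Finset.sum_congr rfl fun ξ _ => Finset.sum_filter (fun i => ξ i = 1) (fun i => Y i 1)
      _ = ∑ i : Fin N, ∑ ξ ∈ S, (if ξ i = 1 then Y i 1 else 0) := Finset.sum_comm
      _ = ∑ i : Fin N, ((S.filter fun ξ => ξ i = 1).card : ℝ) * Y i 1 := by
          refine Finset.sum_congr rfl fun i _ => ?_
          rw [← Finset.sum_filter, Finset.sum_const, nsmul_eq_mul]
      _ = ∑ i : Fin N, ((N2 : ℝ) * T / N) * Y i 1 := by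
          exact Finset.sum_congr rfl fun i _ => by rw [hA1_real i]
      _ = (N2 : ℝ) * T * P1 / N := by rw [← Finset.mul_sum, ← hP1]; ring
  -- the product sum
  have hSab : ∑ ξ ∈ S, (∑ i ∈ univ.filter (fun i => ξ i = 0), Y i 0)
        * (∑ j ∈ univ.filter (fun j => ξ j = 1), Y j 1)
      = (N1 : ℝ) * N2 * T * (P0 * P1 - Q) / ((N : ℝ) * ((N : ℝ) - 1)) := by
    have step1 : ∀ ξ : Fin N → Fin 3, (∑ i ∈ univ.filter (fun i => ξ i = 0), Y i 0)
          * (∑ j ∈ univ.filter (fun j => ξ j = 1), Y j 1)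
        = ∑ i : Fin N, ∑ j : Fin N,
            (if ξ i = 0 ∧ ξ j = 1 then Y i 0 * Y j 1 else 0) := by
      intro ξ
      rw [Finset.sum_filter (fun i => ξ i = 0) (fun i => Y i 0),
        Finset.sum_filter (fun j => ξ j = 1) (fun j => Y j 1), Finset.sum_mul_sum]
      refine Finset.sum_congr rfl fun i _ => Finset.sum_congr rfl fun j _ => ?_
      by_cases hA : ξ i = 0 <;> by_cases hB : ξ j = 1 <;> simp [hA, hB]
    calc ∑ ξ ∈ S, (∑ i ∈ univ.filter (fun i => ξ i = 0), Y i 0)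
          * (∑ j ∈ univ.filter (fun j => ξ j = 1), Y j 1)
        = ∑ ξ ∈ S, ∑ i : Fin N, ∑ j : Fin N,
            (if ξ i = 0 ∧ ξ j = 1 then Y i 0 * Y j 1 else 0) := by
          exact Finset.sum_congr rfl fun ξ _ => step1 ξ
      _ = ∑ i : Fin N, ∑ ξ ∈ S, ∑ j : Fin N,
            (if ξ i = 0 ∧ ξ j = 1 then Y i 0 * Y j 1 else 0) := Finset.sum_comm
      _ = ∑ i : Fin N, ∑ j : Fin N, ∑ ξ ∈ S,
            (if ξ i = 0 ∧ ξ j = 1 then Y i 0 * Y j 1 else 0) := by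
          exact Finset.sum_congr rfl fun i _ => Finset.sum_comm
      _ = ∑ i : Fin N, ∑ j : Fin N,
            ((S.filter fun ξ => ξ i = 0 ∧ ξ j = 1).card : ℝ) * (Y i 0 * Y j 1) := by
          refine Finset.sum_congr rfl fun i _ => Finset.sum_congr rfl fun j _ => ?_
          rw [← Finset.sum_filter, Finset.sum_const, nsmul_eq_mul]
      _ = ∑ i : Fin N, ∑ j : Fin N, (if j = i then 0 else
            ((N1 : ℝ) * N2 * T / ((N : ℝ) * ((N : ℝ) - 1))) * (Y i 0 * Y j 1)) := by
          refine Finset.sum_congr rfl fun i _ => Finset.sum_congr rfl fun j _ => ?_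
          by_cases hji : j = i
          · subst hji
            rw [hBdiag j]
            simp
          · rw [hB_real i j (fun h => hji h.symm), if_neg hji]
      _ = ∑ i : Fin N, (((N1 : ℝ) * N2 * T / ((N : ℝ) * ((N : ℝ) - 1)))
            * (Y i 0 * P1) - ((N1 : ℝ) * N2 * T / ((N : ℝ) * ((N : ℝ) - 1)))
            * (Y i 0 * Y i 1)) := by
          refine Finset.sum_congr rfl fun i _ => ?_
          have hsplit : ∀ j : Fin N, (if j = i then (0:ℝ) else
              ((N1 : ℝ) * N2 * T / ((N : ℝ) * ((N : ℝ) - 1))) * (Y i 0 * Y j 1))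
              = ((N1 : ℝ) * N2 * T / ((N : ℝ) * ((N : ℝ) - 1))) * (Y i 0 * Y j 1)
                - (if j = i then ((N1 : ℝ) * N2 * T / ((N : ℝ) * ((N : ℝ) - 1)))
                    * (Y i 0 * Y j 1) else 0) := by
            intro j; by_cases hji : j = i <;> simp [hji]
          rw [Finset.sum_congr rfl fun j _ => hsplit j, Finset.sum_sub_distrib,
            Finset.sum_ite_eq' univ i]
          simp only [mem_univ, if_true]
          rw [← Finset.mul_sum, ← Finset.mul_sum, ← hP1]
      _ = (N1 : ℝ) * N2 * T * (P0 * P1 - Q) / ((N : ℝ) * ((N : ℝ) - 1)) := by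
          rw [Finset.sum_sub_distrib, ← Finset.mul_sum, ← Finset.mul_sum]
          rw [show (∑ i, Y i 0 * P1) = P0 * P1 by rw [← Finset.sum_mul, ← hP0], ← hQ]
          ring
  -- expand the covariance sum
  have expand : ∑ ξ ∈ S, (ybar1 ξ - Ybar 0) * (ybar2 ξ - Ybar 1)
      = (∑ ξ ∈ S, (∑ i ∈ univ.filter (fun i => ξ i = 0), Y i 0)
            * (∑ j ∈ univ.filter (fun j => ξ j = 1), Y j 1)) / ((N1 : ℝ) * N2)
        - (Ybar 1 / N1) * (∑ ξ ∈ S, (∑ i ∈ univ.filter (fun i => ξ i = 0), Y i 0))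
        - (Ybar 0 / N2) * (∑ ξ ∈ S, (∑ i ∈ univ.filter (fun i => ξ i = 1), Y i 1))
        + T * (Ybar 0 * Ybar 1) := by
    have hterm : ∀ ξ : Fin N → Fin 3, (ybar1 ξ - Ybar 0) * (ybar2 ξ - Ybar 1)
        = ((∑ i ∈ univ.filter (fun i => ξ i = 0), Y i 0)
              * (∑ j ∈ univ.filter (fun j => ξ j = 1), Y j 1)) / ((N1 : ℝ) * N2)
          - (Ybar 1 / N1) * (∑ i ∈ univ.filter (fun i => ξ i = 0), Y i 0)
          - (Ybar 0 / N2) * (∑ i ∈ univ.filter (fun i => ξ i = 1), Y i 1)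
          + Ybar 0 * Ybar 1 := by
      intro ξ
      rw [hybar1, hybar2]
      field_simp
      ring
    rw [Finset.sum_congr rfl fun ξ _ => hterm ξ]
    rw [Finset.sum_add_distrib, Finset.sum_sub_distrib, Finset.sum_sub_distrib,
      ← Finset.sum_div, ← Finset.mul_sum, ← Finset.mul_sum, Finset.sum_const,
      nsmul_eq_mul, ← hT]
  -- expansion of the finite-population covariance numerator
  have hSum12 : ∑ i, (Y i 0 - Ybar 0) * (Y i 1 - Ybar 1)
      = Q - Ybar 1 * P0 - Ybar 0 * P1 + N * (Ybar 0 * Ybar 1) := by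
    have hterm : ∀ i : Fin N, (Y i 0 - Ybar 0) * (Y i 1 - Ybar 1)
        = Y i 0 * Y i 1 - Ybar 1 * Y i 0 - Ybar 0 * Y i 1 + Ybar 0 * Ybar 1 :=
      fun i => by ring
    rw [Finset.sum_congr rfl fun i _ => hterm i]
    rw [Finset.sum_add_distrib, Finset.sum_sub_distrib, Finset.sum_sub_distrib,
      ← Finset.mul_sum, ← Finset.mul_sum, Finset.sum_const, Finset.card_univ,
      Fintype.card_fin, nsmul_eq_mul, ← hP0, ← hP1, ← hQ]
  -- finish
  rw [expand, hSa, hSb, hSab, hS12, hSum12, hYbar 0, hYbar 1, ← hP0, ← hP1]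
  field_simp
  ring
end
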